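/- Fix α₀ := 1/20 and set L₅ := 4/19 + (2/5) ζ(5) + 4 ζ(7) α₀² / (7 (1 − α₀²)). For every integer m ≥ 1 and every real α with 0 ≤ α ≤ α₀, define u_m(α) := (m/(m − α)) · (Γ(1 − α)/Γ(1 + α)) · (Γ(m + α)/Γ(m − α)). Then | log u_m(α) − [ (2 H_{m−1} + 1/m) α + α²/(2m²) + ((2/3) H^{(3)}_{m−1} + 1/(3m³)) α³ + α⁴/(4m⁴) ] | ≤ L₅ α⁵. -/

import Mathlib

/-- `ζ(s) = ∑_{n≥1} n^{-s}` for real `s`. -/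
noncomputable def zetaR (s : ℝ) : ℝ := ∑' n : ℕ, 1 / ((n : ℝ) + 1) ^ s

/-- `H_M = ∑_{k=1}^M 1/k`, with `H_0 = 0`. -/
noncomputable def harmonicR (M : ℕ) : ℝ := ∑ k ∈ Finset.range M, 1 / ((k : ℝ) + 1)

/-- `H_M^{(3)} = ∑_{k=1}^M 1/k³`, with `H_0^{(3)} = 0`. -/
noncomputable def harmonic3R (M : ℕ) : ℝ := ∑ k ∈ Finset.range M, 1 / ((k : ℝ) + 1) ^ 3

set_option maxHeartbeats 1000000
open Finset Real


lemma log1_expand {x : ℝ} (h0 : 0 ≤ x) (h1 : x ≤ 1/20) :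
    0 ≤ -Real.log (1 - x) - (x + x^2/2 + x^3/3 + x^4/4) ∧
    -Real.log (1 - x) - (x + x^2/2 + x^3/3 + x^4/4) ≤ x^5/(5*(1-x)) := by
  have hx : |x| < 1 := by rw [abs_of_nonneg h0]; linarith
  have hx1 : x < 1 := by linarith
  have hs := Real.hasSum_pow_div_log_of_abs_lt_one hx
  have hsum := hs.summable
  have hsplit := Summable.sum_add_tsum_nat_add 4 hsum
  rw [hs.tsum_eq] at hsplit
  have hfin : ∑ i ∈ range 4, x ^ (i + 1) / ((i : ℝ) + 1)
      = x + x^2/2 + x^3/3 + x^4/4 := by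
    simp [Finset.sum_range_succ]; ring
  have hT : -Real.log (1 - x) - (x + x^2/2 + x^3/3 + x^4/4)
      = ∑' n : ℕ, x ^ (n + 4 + 1) / ((n : ℝ) + 4 + 1) := by
    rw [← hfin]
    have := hsplit
    push_cast at this ⊢
    linarith [this]
  have htsum : Summable (fun n : ℕ => x ^ (n + 4 + 1) / ((n : ℝ) + 4 + 1)) := by
    have := (summable_nat_add_iff 4).mpr hsum
    simpa [add_comm, add_assoc, add_left_comm] using this
  constructor
  · rw [hT]
    refine tsum_nonneg fun n => by positivity
  · rw [hT]
    have hg : Summable (fun n : ℕ => x^5/5 * x ^ n) :=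
      (summable_geometric_of_lt_one h0 hx1).mul_left _
    have hle : ∀ n : ℕ, x ^ (n + 4 + 1) / ((n : ℝ) + 4 + 1) ≤ x^5/5 * x ^ n := by
      intro n
      have h5 : (5 : ℝ) ≤ (n : ℝ) + 4 + 1 := by linarith [Nat.cast_nonneg (α := ℝ) n]
      have hp : (0:ℝ) ≤ x ^ (n+4+1) := by positivity
      calc x ^ (n + 4 + 1) / ((n : ℝ) + 4 + 1) ≤ x ^ (n+4+1) / 5 := by
            apply div_le_div_of_nonneg_left hp (by norm_num) h5
        _ = x^5/5 * x ^ n := by ring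
    calc (∑' n : ℕ, x ^ (n + 4 + 1) / ((n : ℝ) + 4 + 1)) ≤ ∑' n : ℕ, x^5/5 * x ^ n :=
          Summable.tsum_le_tsum hle htsum hg
      _ = x^5/5 * (1 - x)⁻¹ := by rw [tsum_mul_left, tsum_geometric_of_lt_one h0 hx1]
      _ = x^5/(5*(1-x)) := by field_simp


lemma log_ratio_expand {x : ℝ} (h0 : 0 ≤ x) (h1 : x ≤ 1/20) :
    0 ≤ Real.log (1 + x) - Real.log (1 - x) - (2*x + (2/3)*x^3) ∧
    Real.log (1 + x) - Real.log (1 - x) - (2*x + (2/3)*x^3)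
      ≤ (2/5)*x^5 + (2/7)*x^7/(1-x^2) := by
  have hx : |x| < 1 := by rw [abs_of_nonneg h0]; linarith
  have hx' : |(-x)| < 1 := by rwa [abs_neg]
  have hx1 : x < 1 := by linarith
  have hs1 := Real.hasSum_pow_div_log_of_abs_lt_one hx
  have hs2 := Real.hasSum_pow_div_log_of_abs_lt_one hx'
  rw [show (1 : ℝ) - -x = 1 + x by ring] at hs2
  have hs := hs1.sub hs2
  set f : ℕ → ℝ := fun n => x ^ (n + 1) / ((n : ℝ) + 1) - (-x) ^ (n + 1) / ((n : ℝ) + 1) with hf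
  have hsum : Summable f := hs.summable
  have hseq : -Real.log (1 - x) - -Real.log (1 + x) = Real.log (1 + x) - Real.log (1 - x) := by ring
  rw [hseq] at hs
  have hsplit := Summable.sum_add_tsum_nat_add 4 hsum
  rw [hs.tsum_eq] at hsplit
  have hfin : ∑ i ∈ range 4, f i = 2*x + (2/3)*x^3 := by
    simp [hf, Finset.sum_range_succ]; ring
  have hT : Real.log (1 + x) - Real.log (1 - x) - (2*x + (2/3)*x^3)
      = ∑' n : ℕ, f (n + 4) := by
    rw [← hfin]; linarith [hsplit]
  -- nonnegativity of each tail term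
  have hpw : ∀ j : ℕ, (-x) ^ j ≤ x ^ j := by
    intro j
    calc (-x) ^ j ≤ |(-x) ^ j| := le_abs_self _
      _ = |x| ^ j := by rw [abs_pow, abs_neg]
      _ = x ^ j := by rw [abs_of_nonneg h0]
  have hfeq : ∀ n : ℕ, f (n + 4) = (x ^ (n + 5) - (-x) ^ (n + 5)) / ((n : ℝ) + 5) := by
    intro n
    simp only [hf]
    push_cast
    rw [show n + 4 + 1 = n + 5 from rfl]
    ring
  have hfnn : ∀ n : ℕ, 0 ≤ f (n + 4) := by
    intro n
    rw [hfeq]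
    exact div_nonneg (by linarith [hpw (n + 5)]) (by positivity)
  have hg : Summable (fun n => f (n + 4)) := (summable_nat_add_iff 4).mpr hsum
  have hge : ∀ k : ℕ, f (2 * k + 4) = 2 * x ^ (2 * k + 5) / ((2 * (k:ℝ)) + 5) := by
    intro k
    rw [hfeq]
    have hodd : Odd (2 * k + 5) := ⟨k + 2, by ring⟩
    rw [hodd.neg_pow]
    push_cast
    ring_nf
  have hgo : ∀ k : ℕ, f (2 * k + 1 + 4) = 0 := by
    intro k
    rw [show 2 * k + 1 + 4 = (2 * k + 1) + 4 from rfl, hfeq]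
    have hev : Even (2 * k + 1 + 5) := ⟨k + 3, by ring⟩
    rw [hev.neg_pow]
    simp
  have hse : Summable (fun k => f (2 * k + 4)) := by
    have := hg.comp_injective (mul_right_injective₀ (two_ne_zero (α := ℕ)))
    exact this
  have hso : Summable (fun k => f (2 * k + 1 + 4)) := summable_zero.congr fun k => (hgo k).symm
  have hsplit2 := tsum_even_add_odd (f := fun n => f (n + 4)) hse hso
  have hozero : (∑' k : ℕ, f (2 * k + 1 + 4)) = 0 := by
    rw [tsum_congr hgo]; exact tsum_zero
  -- bound the even part
  have hsplitE := Summable.sum_add_tsum_nat_add 1 hse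
  have hgeo : Summable (fun k : ℕ => (2/7) * x^7 * (x^2) ^ k) := by
    refine Summable.mul_left _ (summable_geometric_of_lt_one (by positivity) ?_)
    nlinarith
  have hle : ∀ k : ℕ, f (2 * (k + 1) + 4) ≤ (2/7) * x^7 * (x^2) ^ k := by
    intro k
    have hrw : f (2 * (k + 1) + 4) = 2 * x ^ (2 * k + 7) / (2 * (k:ℝ) + 7) := by
      rw [show 2 * (k + 1) + 4 = 2 * k + 2 + 4 from by ring, hfeq]
      have hodd : Odd (2 * k + 2 + 5) := ⟨k + 3, by ring⟩
      rw [hodd.neg_pow]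
      push_cast
      rw [show 2 * k + 2 + 5 = 2 * k + 7 from by ring]
      ring_nf
    rw [hrw]
    have h7 : (7 : ℝ) ≤ 2 * (k:ℝ) + 7 := by
      have : (0:ℝ) ≤ (k:ℝ) := Nat.cast_nonneg k
      linarith
    have hnum : (0:ℝ) ≤ 2 * x ^ (2 * k + 7) := by positivity
    calc 2 * x ^ (2 * k + 7) / (2 * (k:ℝ) + 7)
        ≤ 2 * x ^ (2 * k + 7) / 7 := div_le_div_of_nonneg_left hnum (by norm_num) h7
      _ = (2/7) * x^7 * (x^2) ^ k := by rw [← pow_mul]; ring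
  have htail : (∑' k : ℕ, f (2 * (k + 1) + 4)) ≤ (2/7) * x^7 / (1 - x^2) := by
    calc (∑' k : ℕ, f (2 * (k + 1) + 4))
        ≤ ∑' k : ℕ, (2/7) * x^7 * (x^2) ^ k :=
          Summable.tsum_le_tsum hle ((summable_nat_add_iff 1).mpr hse) hgeo
      _ = (2/7) * x^7 * (1 - x^2)⁻¹ := by
          rw [tsum_mul_left, tsum_geometric_of_lt_one (by positivity) (by nlinarith)]
      _ = (2/7) * x^7 / (1 - x^2) := by ring
  have h10 : ∑ k ∈ range 1, f (2 * k + 4) = (2/5) * x^5 := by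
    rw [Finset.sum_range_one, hge 0]
    norm_num
    ring
  have hEbound : (∑' k : ℕ, f (2 * k + 4)) ≤ (2/5) * x^5 + (2/7) * x^7 / (1 - x^2) := by
    rw [← hsplitE, h10]
    linarith [htail]
  constructor
  · rw [hT]
    exact tsum_nonneg hfnn
  · have hsplit2' : (∑' k : ℕ, f (2 * k + 4)) + (∑' k : ℕ, f (2 * k + 1 + 4))
        = ∑' n : ℕ, f (n + 4) := hsplit2
    rw [hT, ← hsplit2', hozero, add_zero]
    exact hEbound



lemma summable_aux (p : ℕ) (hp : 2 ≤ p) : Summable (fun n : ℕ => 1 / ((n : ℝ) + 1) ^ p) := by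
  have h1 : Summable (fun n : ℕ => 1 / (n : ℝ) ^ p) := Real.summable_one_div_nat_pow.mpr hp
  have h2 := (summable_nat_add_iff 1).mpr h1
  exact h2.congr fun n => by push_cast; ring

lemma zeta_ge (p : ℕ) (hp : 2 ≤ p) (M : ℕ) :
    ∑ k ∈ range M, 1 / ((k : ℝ) + 1) ^ p ≤ zetaR p := by
  have hz : zetaR p = ∑' n : ℕ, 1 / ((n : ℝ) + 1) ^ p := by
    unfold zetaR
    exact tsum_congr fun n => by rw [Real.rpow_natCast]
  rw [hz]
  exact Summable.sum_le_tsum (range M) (fun i _ => by positivity) (summable_aux p hp)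

lemma zeta_nonneg (p : ℕ) (hp : 2 ≤ p) : 0 ≤ zetaR p := by
  have := zeta_ge p hp 0
  simpa using this



lemma gamma_prod (x : ℝ) (hx : 0 < x) (n : ℕ) :
    Real.Gamma (x + n) = Real.Gamma x * ∏ k ∈ range n, (x + k) := by
  induction n with
  | zero => simp
  | succ n ih =>
    have h : x + (n : ℝ) ≠ 0 := by positivity
    have h2 : x + ((n : ℕ) + 1 : ℕ) = (x + n) + 1 := by push_cast; ring
    rw [h2, Real.Gamma_add_one h, ih, prod_range_succ]; ring


/-- Expansion of `log u_m(α)` up to order `α⁴` with explicit remainder constant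
`L₅ = 4/19 + (2/5)ζ(5) + 4ζ(7)α₀²/(7(1−α₀²))` at `α₀ = 1/20`. -/
theorem stmt9 (m : ℕ) (hm : 1 ≤ m) (α : ℝ) (h0 : 0 ≤ α) (h1 : α ≤ 1 / 20) :
    |Real.log (((m : ℝ) / ((m : ℝ) - α)) * (Real.Gamma (1 - α) / Real.Gamma (1 + α)) *
          (Real.Gamma ((m : ℝ) + α) / Real.Gamma ((m : ℝ) - α)))
        - ((2 * harmonicR (m - 1) + 1 / (m : ℝ)) * α
            + α ^ 2 / (2 * (m : ℝ) ^ 2)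
            + ((2 / 3) * harmonic3R (m - 1) + 1 / (3 * (m : ℝ) ^ 3)) * α ^ 3
            + α ^ 4 / (4 * (m : ℝ) ^ 4))|
      ≤ (4 / 19 + (2 / 5) * zetaR 5
            + 4 * zetaR 7 * (1 / 20 : ℝ) ^ 2 / (7 * (1 - (1 / 20 : ℝ) ^ 2))) * α ^ 5 := by
  have hmR : (1 : ℝ) ≤ (m : ℝ) := by exact_mod_cast hm
  have hm0 : (m : ℝ) ≠ 0 := by linarith
  have hmα : 0 < (m : ℝ) - α := by linarith
  have hcast : ((m - 1 : ℕ) : ℝ) = (m : ℝ) - 1 := by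
    push_cast [hm]; ring
  have hG1 : Real.Gamma ((m : ℝ) + α)
      = Real.Gamma (1 + α) * ∏ k ∈ range (m - 1), (1 + α + (k : ℝ)) := by
    have h := gamma_prod (1 + α) (by linarith) (m - 1)
    rw [hcast, show 1 + α + ((m : ℝ) - 1) = (m : ℝ) + α by ring] at h
    exact h
  have hG2 : Real.Gamma ((m : ℝ) - α)
      = Real.Gamma (1 - α) * ∏ k ∈ range (m - 1), (1 - α + (k : ℝ)) := by
    have h := gamma_prod (1 - α) (by linarith) (m - 1)
    rw [hcast, show 1 - α + ((m : ℝ) - 1) = (m : ℝ) - α by ring] at h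
    exact h
  have hΓp : (0 : ℝ) < Real.Gamma (1 + α) := Real.Gamma_pos_of_pos (by linarith)
  have hΓm : (0 : ℝ) < Real.Gamma (1 - α) := Real.Gamma_pos_of_pos (by linarith)
  have hpos1 : ∀ k ∈ range (m - 1), (0 : ℝ) < 1 + α + (k : ℝ) := by
    intro k _; positivity
  have hpos2 : ∀ k ∈ range (m - 1), (0 : ℝ) < 1 - α + (k : ℝ) := by
    intro k _
    have : (0 : ℝ) ≤ (k : ℝ) := Nat.cast_nonneg k
    linarith
  have hprod2 : (0 : ℝ) < ∏ k ∈ range (m - 1), (1 - α + (k : ℝ)) := prod_pos hpos2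
  have hprodr : (0 : ℝ) < ∏ k ∈ range (m - 1), ((1 + α + (k : ℝ)) / (1 - α + (k : ℝ))) :=
    prod_pos fun k hk => div_pos (hpos1 k hk) (hpos2 k hk)
  have hu : ((m : ℝ) / ((m : ℝ) - α)) * (Real.Gamma (1 - α) / Real.Gamma (1 + α)) *
        (Real.Gamma ((m : ℝ) + α) / Real.Gamma ((m : ℝ) - α))
      = ((m : ℝ) / ((m : ℝ) - α)) *
        ∏ k ∈ range (m - 1), ((1 + α + (k : ℝ)) / (1 - α + (k : ℝ))) := by
    rw [hG1, hG2, Finset.prod_div_distrib]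
    field_simp
  have hmm : (0:ℝ) < (m : ℝ) / ((m : ℝ) - α) := div_pos (by linarith) hmα
  have hlogm : Real.log ((m : ℝ) / ((m : ℝ) - α)) = -Real.log (1 - α / m) := by
    have hq : (m : ℝ) / ((m : ℝ) - α) = (1 - α / m)⁻¹ := by
      field_simp
    rw [hq, Real.log_inv]
  have hterm : ∀ k ∈ range (m - 1),
      Real.log ((1 + α + (k : ℝ)) / (1 - α + (k : ℝ)))
        = Real.log (1 + α / ((k : ℝ) + 1)) - Real.log (1 - α / ((k : ℝ) + 1)) := by
    intro k hk
    have hk1 : (0 : ℝ) < (k : ℝ) + 1 := by positivity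
    have hxk : α / ((k : ℝ) + 1) ≤ α := div_le_self h0 (by linarith [Nat.cast_nonneg (α := ℝ) k])
    have hn : (0 : ℝ) < 1 + α / ((k : ℝ) + 1) := by positivity
    have hd : (0 : ℝ) < 1 - α / ((k : ℝ) + 1) := by
      have : α / ((k : ℝ) + 1) ≤ 1 / 20 := le_trans hxk h1
      linarith
    have hq : (1 + α + (k : ℝ)) / (1 - α + (k : ℝ))
        = (1 + α / ((k : ℝ) + 1)) / (1 - α / ((k : ℝ) + 1)) := by
      rw [div_eq_div_iff (hpos2 k hk).ne' (by linarith : (1:ℝ) - α / ((k:ℝ)+1) ≠ 0)]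
      field_simp
      ring
    rw [hq, Real.log_div hn.ne' hd.ne']
  have hlog : Real.log (((m : ℝ) / ((m : ℝ) - α)) * (Real.Gamma (1 - α) / Real.Gamma (1 + α)) *
        (Real.Gamma ((m : ℝ) + α) / Real.Gamma ((m : ℝ) - α)))
      = -Real.log (1 - α / m)
        + ∑ k ∈ range (m - 1),
            (Real.log (1 + α / ((k : ℝ) + 1)) - Real.log (1 - α / ((k : ℝ) + 1))) := by
    rw [hu, Real.log_mul hmm.ne' hprodr.ne', hlogm,
      Real.log_prod (fun k hk => (div_pos (hpos1 k hk) (hpos2 k hk)).ne'),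
      Finset.sum_congr rfl hterm]
  have hpoly :
      (α/m + (α/m)^2/2 + (α/m)^3/3 + (α/m)^4/4)
        + ∑ k ∈ range (m-1), (2*(α/((k:ℝ)+1)) + (2/3)*(α/((k:ℝ)+1))^3)
      = (2 * harmonicR (m - 1) + 1 / (m : ℝ)) * α + α ^ 2 / (2 * (m : ℝ) ^ 2)
        + ((2 / 3) * harmonic3R (m - 1) + 1 / (3 * (m : ℝ) ^ 3)) * α ^ 3
        + α ^ 4 / (4 * (m : ℝ) ^ 4) := by
    unfold harmonicR harmonic3R
    have e1 : ∑ k ∈ range (m-1), 2*(α/((k:ℝ)+1))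
        = 2*α*∑ k ∈ range (m-1), 1/((k:ℝ)+1) := by
      rw [Finset.mul_sum]; exact Finset.sum_congr rfl fun k _ => by ring
    have e2 : ∑ k ∈ range (m-1), (2/3)*(α/((k:ℝ)+1))^3
        = (2/3)*α^3*∑ k ∈ range (m-1), 1/((k:ℝ)+1)^3 := by
      rw [Finset.mul_sum]
      refine Finset.sum_congr rfl fun k _ => ?_
      rw [div_pow]; ring
    rw [Finset.sum_add_distrib, e1, e2]
    field_simp
    ring
  -- remainder terms
  have hx0n : 0 ≤ α / m := div_nonneg h0 (by linarith)
  have hx0a : α / m ≤ α := div_le_self h0 hmR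
  have hx01 : α / m ≤ 1/20 := le_trans hx0a h1
  obtain ⟨hR1n, hR1b⟩ := log1_expand hx0n hx01
  have hxkn : ∀ k : ℕ, 0 ≤ α / ((k:ℝ)+1) := fun k => div_nonneg h0 (by positivity)
  have hxka : ∀ k : ℕ, α / ((k:ℝ)+1) ≤ α := fun k =>
    div_le_self h0 (by linarith [Nat.cast_nonneg (α := ℝ) k])
  have hxk1 : ∀ k : ℕ, α / ((k:ℝ)+1) ≤ 1/20 := fun k => le_trans (hxka k) h1
  have hkey : Real.log (((m : ℝ) / ((m : ℝ) - α)) * (Real.Gamma (1 - α) / Real.Gamma (1 + α)) *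
          (Real.Gamma ((m : ℝ) + α) / Real.Gamma ((m : ℝ) - α)))
        - ((2 * harmonicR (m - 1) + 1 / (m : ℝ)) * α
            + α ^ 2 / (2 * (m : ℝ) ^ 2)
            + ((2 / 3) * harmonic3R (m - 1) + 1 / (3 * (m : ℝ) ^ 3)) * α ^ 3
            + α ^ 4 / (4 * (m : ℝ) ^ 4))
      = (-Real.log (1 - α/m) - (α/m + (α/m)^2/2 + (α/m)^3/3 + (α/m)^4/4))
        + ∑ k ∈ range (m-1),
            (Real.log (1 + α/((k:ℝ)+1)) - Real.log (1 - α/((k:ℝ)+1))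
              - (2*(α/((k:ℝ)+1)) + (2/3)*(α/((k:ℝ)+1))^3)) := by
    have hsplitsum : ∑ k ∈ range (m-1),
        (Real.log (1 + α/((k:ℝ)+1)) - Real.log (1 - α/((k:ℝ)+1))
          - (2*(α/((k:ℝ)+1)) + (2/3)*(α/((k:ℝ)+1))^3))
        = (∑ k ∈ range (m-1),
            (Real.log (1 + α/((k:ℝ)+1)) - Real.log (1 - α/((k:ℝ)+1))))
          - ∑ k ∈ range (m-1), (2*(α/((k:ℝ)+1)) + (2/3)*(α/((k:ℝ)+1))^3) :=
      Finset.sum_sub_distrib _ _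
    rw [hlog, ← hpoly, hsplitsum]
    ring
  rw [hkey]
  have hknn : ∀ k ∈ range (m-1),
      0 ≤ Real.log (1 + α/((k:ℝ)+1)) - Real.log (1 - α/((k:ℝ)+1))
          - (2*(α/((k:ℝ)+1)) + (2/3)*(α/((k:ℝ)+1))^3) := fun k _ =>
    (log_ratio_expand (hxkn k) (hxk1 k)).1
  rw [abs_of_nonneg (add_nonneg hR1n (Finset.sum_nonneg hknn))]
  -- bound the m-term
  have hb1 : -Real.log (1 - α/m) - (α/m + (α/m)^2/2 + (α/m)^3/3 + (α/m)^4/4)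
      ≤ (4/19) * α^5 := by
    refine le_trans hR1b ?_
    have h5 : (α/m)^5 ≤ α^5 := pow_le_pow_left₀ hx0n hx0a 5
    have : (α/m)^5 / (5*(1-α/m)) ≤ α^5 / (19/4) :=
      div_le_div₀ (by positivity) h5 (by norm_num) (by linarith)
    linarith [this, (by ring : α^5 / (19/4) = (4/19) * α^5)]
  -- bound the k-sum
  have hbk : ∀ k ∈ range (m-1),
      Real.log (1 + α/((k:ℝ)+1)) - Real.log (1 - α/((k:ℝ)+1))
          - (2*(α/((k:ℝ)+1)) + (2/3)*(α/((k:ℝ)+1))^3)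
        ≤ (2/5)*α^5 * (1/((k:ℝ)+1)^5) + (4/2793)*α^5 * (1/((k:ℝ)+1)^7) := by
    intro k _
    refine le_trans (log_ratio_expand (hxkn k) (hxk1 k)).2 ?_
    set x := α/((k:ℝ)+1) with hxdef
    have hk1 : (0:ℝ) < (k:ℝ)+1 := by positivity
    have hxn := hxkn k
    have hx1 := hxk1 k
    have h5eq : (2/5)*x^5 = (2/5)*α^5 * (1/((k:ℝ)+1)^5) := by
      rw [hxdef, div_pow]; ring
    have hx2 : (399:ℝ)/400 ≤ 1 - x^2 := by nlinarith
    have step1 : (2/7)*x^7/(1-x^2) ≤ (2/7)*x^7/((399:ℝ)/400) :=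
      div_le_div_of_nonneg_left (by positivity) (by norm_num) hx2
    have h7le : x^7 ≤ (α^5/400) * (1/((k:ℝ)+1)^7) := by
      rw [hxdef, div_pow]
      have hsq : α^2 ≤ 1/400 := by nlinarith
      have ha7 : α^7 ≤ α^5/400 := by
        calc α^7 = α^5 * α^2 := by ring
          _ ≤ α^5 * (1/400) := mul_le_mul_of_nonneg_left hsq (pow_nonneg h0 5)
          _ = α^5/400 := by ring
      rw [div_eq_mul_one_div (α^7)]
      exact mul_le_mul_of_nonneg_right ha7 (by positivity)
    have step2 : (2/7)*x^7/((399:ℝ)/400) ≤ (4/2793)*α^5 * (1/((k:ℝ)+1)^7) := by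
      have h1' : (2/7)*x^7/((399:ℝ)/400) = (800/2793)*x^7 := by ring
      rw [h1']
      have hq : (0:ℝ) ≤ α^5 * (1/((k:ℝ)+1)^7) := by positivity
      nlinarith [h7le, hq]
    linarith [step1, step2, h5eq.le, h5eq.ge]
  have hsum1 : ∑ k ∈ range (m-1),
        ((2/5)*α^5 * (1/((k:ℝ)+1)^5) + (4/2793)*α^5 * (1/((k:ℝ)+1)^7))
      = (2/5)*α^5 * (∑ k ∈ range (m-1), 1/((k:ℝ)+1)^5)
        + (4/2793)*α^5 * (∑ k ∈ range (m-1), 1/((k:ℝ)+1)^7) := by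
    rw [Finset.sum_add_distrib, Finset.mul_sum, Finset.mul_sum]
  have hz5 := zeta_ge 5 (by norm_num) (m-1)
  have hz7 := zeta_ge 7 (by norm_num) (m-1)
  have hcast5 : zetaR ((5:ℕ):ℝ) = zetaR 5 := by norm_num
  have hcast7 : zetaR ((7:ℕ):ℝ) = zetaR 7 := by norm_num
  rw [hcast5] at hz5
  rw [hcast7] at hz7
  have hsumb : ∑ k ∈ range (m-1),
        (Real.log (1 + α/((k:ℝ)+1)) - Real.log (1 - α/((k:ℝ)+1))
          - (2*(α/((k:ℝ)+1)) + (2/3)*(α/((k:ℝ)+1))^3))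
      ≤ (2/5)*α^5 * zetaR 5 + (4/2793)*α^5 * zetaR 7 := by
    refine le_trans (Finset.sum_le_sum hbk) ?_
    rw [hsum1]
    have c5 : (0:ℝ) ≤ (2/5)*α^5 := by positivity
    have c7 : (0:ℝ) ≤ (4/2793)*α^5 := by positivity
    have := mul_le_mul_of_nonneg_left hz5 c5
    have := mul_le_mul_of_nonneg_left hz7 c7
    linarith
  have hrhs : (4 / 19 + (2 / 5) * zetaR 5
        + 4 * zetaR 7 * (1 / 20 : ℝ) ^ 2 / (7 * (1 - (1 / 20 : ℝ) ^ 2))) * α ^ 5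
      = (4/19)*α^5 + ((2/5)*α^5 * zetaR 5 + (4/2793)*α^5 * zetaR 7) := by
    ring
  rw [hrhs]
  exact add_le_add hb1 hsumb
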